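/- Let N ≥ 1 and let u, v ∈ C²(ℝ^N) be a non-negative bounded solution of −Δu = β u^s v^{s+γ} − λ u^{2s+γ}, −Δv = β v^s u^{s+γ} − λ v^{2s+γ} with s ≥ 0, γ ≥ 1, 0 ≤ β < λ. Then u = v = 0. -/

import Mathlib

open Real

noncomputable def lap {N : ℕ} (u : EuclideanSpace ℝ (Fin N) → ℝ)
    (x : EuclideanSpace ℝ (Fin N)) : ℝ :=
  ∑ i : Fin N, fderiv ℝ (fun y => fderiv ℝ u y (EuclideanSpace.single i (1:ℝ))) x
    (EuclideanSpace.single i (1:ℝ))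

section Aux

variable {N : ℕ}

lemma aux_diff_fderiv {f : EuclideanSpace ℝ (Fin N) → ℝ} (hf : ContDiff ℝ 2 f)
    (e : EuclideanSpace ℝ (Fin N)) : Differentiable ℝ (fun y => fderiv ℝ f y e) := by
  have h1 : ContDiff ℝ 1 (fderiv ℝ f) := hf.fderiv_right (by norm_num)
  exact (h1.clm_apply contDiff_const).differentiable (by norm_num)

lemma lap_add {f g : EuclideanSpace ℝ (Fin N) → ℝ} (hf : ContDiff ℝ 2 f)
    (hg : ContDiff ℝ 2 g) (x : EuclideanSpace ℝ (Fin N)) :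
    lap (fun y => f y + g y) x = lap f x + lap g x := by
  unfold lap
  rw [← Finset.sum_add_distrib]
  refine Finset.sum_congr rfl fun i _ => ?_
  set e := EuclideanSpace.single i (1:ℝ) with he
  have hfd : Differentiable ℝ f := hf.differentiable (by norm_num)
  have hgd : Differentiable ℝ g := hg.differentiable (by norm_num)
  have h1 : (fun y => fderiv ℝ (fun z => f z + g z) y e)
      = fun y => fderiv ℝ f y e + fderiv ℝ g y e := by
    funext y
    rw [fderiv_fun_add (hfd y) (hgd y)]
    rfl
  rw [h1, fderiv_fun_add ((aux_diff_fderiv hf e) x) ((aux_diff_fderiv hg e) x)]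
  rfl

lemma lap_sub {f g : EuclideanSpace ℝ (Fin N) → ℝ} (hf : ContDiff ℝ 2 f)
    (hg : ContDiff ℝ 2 g) (x : EuclideanSpace ℝ (Fin N)) :
    lap (fun y => f y - g y) x = lap f x - lap g x := by
  unfold lap
  rw [← Finset.sum_sub_distrib]
  refine Finset.sum_congr rfl fun i _ => ?_
  set e := EuclideanSpace.single i (1:ℝ) with he
  have hfd : Differentiable ℝ f := hf.differentiable (by norm_num)
  have hgd : Differentiable ℝ g := hg.differentiable (by norm_num)
  have h1 : (fun y => fderiv ℝ (fun z => f z - g z) y e)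
      = fun y => fderiv ℝ f y e - fderiv ℝ g y e := by
    funext y
    rw [fderiv_fun_sub (hfd y) (hgd y)]
    rfl
  rw [h1, fderiv_fun_sub ((aux_diff_fderiv hf e) x) ((aux_diff_fderiv hg e) x)]
  rfl

lemma lap_const_mul_norm_sq (a : ℝ) (x : EuclideanSpace ℝ (Fin N)) :
    lap (fun y => a * ‖y‖^2) x = a * (2 * N) := by
  unfold lap
  have key : ∀ i : Fin N,
      fderiv ℝ (fun y => fderiv ℝ (fun z => a * ‖z‖^2) y (EuclideanSpace.single i (1:ℝ))) x
        (EuclideanSpace.single i (1:ℝ)) = a * 2 := by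
    intro i
    set e := EuclideanSpace.single i (1:ℝ) with he
    have hnorm_e : ‖e‖ = 1 := by
      rw [he, EuclideanSpace.norm_single]; norm_num
    have h1 : (fun y => fderiv ℝ (fun z => a * ‖z‖^2) y e)
        = fun y => a * (2 * (innerSL ℝ e) y) := by
      funext y
      have hy : HasFDerivAt (fun z : EuclideanSpace ℝ (Fin N) => a * ‖z‖^2)
          (a • (2 • (innerSL ℝ y))) y :=
        ((hasStrictFDerivAt_norm_sq y).hasFDerivAt).const_mul a
      rw [hy.fderiv, ContinuousLinearMap.smul_apply, ContinuousLinearMap.smul_apply,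
        innerSL_apply_apply, real_inner_comm, smul_eq_mul, nsmul_eq_mul, innerSL_apply_apply]
      norm_num
    rw [h1]
    have h2 : HasFDerivAt (fun y : EuclideanSpace ℝ (Fin N) => a * (2 * (innerSL ℝ e) y))
        (a • ((2:ℝ) • (innerSL ℝ e))) x :=
      (((innerSL ℝ e).hasFDerivAt).const_mul 2).const_mul a
    rw [h2.fderiv, ContinuousLinearMap.smul_apply, ContinuousLinearMap.smul_apply,
      innerSL_apply_apply, real_inner_self_eq_norm_sq, hnorm_e]
    norm_num
  rw [Finset.sum_congr rfl fun i _ => key i]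
  simp [Finset.card_univ]
  ring

lemma deriv2_nonpos_at_max {g : ℝ → ℝ} {c : ℝ} (hdiff : ∀ t, DifferentiableAt ℝ g t)
    (hmax : ∀ t, g t ≤ g 0) (hc : HasDerivAt (deriv g) c 0) : c ≤ 0 := by
  by_contra hpos
  push_neg at hpos
  have h0 : deriv g 0 = 0 :=
    IsLocalMax.deriv_eq_zero (Filter.Eventually.of_forall hmax)
  have hs : Filter.Tendsto (slope (deriv g) 0) (nhdsWithin 0 {(0:ℝ)}ᶜ) (nhds c) :=
    hasDerivAt_iff_tendsto_slope.mp hc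
  have hev : ∀ᶠ t in nhdsWithin 0 {(0:ℝ)}ᶜ, 0 < slope (deriv g) 0 t :=
    hs.eventually (eventually_gt_nhds hpos)
  have hev2 : ∀ᶠ t in nhdsWithin 0 (Set.Ioi (0:ℝ)), 0 < slope (deriv g) 0 t :=
    hev.filter_mono (nhdsWithin_mono 0 (fun t ht => ne_of_gt ht))
  have hev3 : ∀ᶠ t in nhdsWithin 0 (Set.Ioi (0:ℝ)), 0 < deriv g t := by
    filter_upwards [hev2, self_mem_nhdsWithin] with t ht ht0
    have ht0' : (0:ℝ) < t := ht0
    rw [slope_def_field, h0, sub_zero, sub_zero] at ht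
    have := mul_pos ht ht0'
    rwa [div_mul_cancel₀ _ (ne_of_gt ht0')] at this
  rw [eventually_nhdsWithin_iff, Metric.eventually_nhds_iff] at hev3
  obtain ⟨δ, hδ, hball⟩ := hev3
  have hmono : StrictMonoOn g (Set.Icc 0 (δ/2)) := by
    apply strictMonoOn_of_deriv_pos (convex_Icc _ _)
      (fun t _ => (hdiff t).continuousAt.continuousWithinAt)
    intro t ht
    rw [interior_Icc] at ht
    refine hball ?_ ht.1
    rw [Real.dist_eq, sub_zero, abs_of_pos ht.1]
    linarith [ht.2]
  have hlt : g 0 < g (δ/2) := by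
    apply hmono (Set.left_mem_Icc.mpr (by linarith)) (Set.right_mem_Icc.mpr (by linarith))
    linarith
  exact absurd (hmax (δ/2)) (not_le.mpr hlt)

lemma dir_secondDeriv_nonpos {f : EuclideanSpace ℝ (Fin N) → ℝ} (hf : ContDiff ℝ 2 f)
    {x₀ : EuclideanSpace ℝ (Fin N)} (hmax : ∀ x, f x ≤ f x₀) (e : EuclideanSpace ℝ (Fin N)) :
    fderiv ℝ (fun y => fderiv ℝ f y e) x₀ e ≤ 0 := by
  set L : ℝ → EuclideanSpace ℝ (Fin N) := fun t => x₀ + t • e with hLdef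
  have hL : ∀ t, HasDerivAt L e t := by
    intro t
    have := ((hasDerivAt_id t).smul_const e).const_add x₀
    simpa [hLdef] using this
  have hL0 : L 0 = x₀ := by simp [hLdef]
  set g : ℝ → ℝ := fun t => f (L t) with hgdef
  have hfd : Differentiable ℝ f := hf.differentiable (by norm_num)
  have hg' : ∀ t, HasDerivAt g (fderiv ℝ f (L t) e) t := fun t =>
    ((hfd (L t)).hasFDerivAt).comp_hasDerivAt t (hL t)
  have hdg : deriv g = fun t => fderiv ℝ f (L t) e := funext fun t => (hg' t).deriv
  have hF : Differentiable ℝ (fun y => fderiv ℝ f y e) := aux_diff_fderiv hf e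
  have hg'' : HasDerivAt (deriv g) (fderiv ℝ (fun y => fderiv ℝ f y e) x₀ e) 0 := by
    have h2 : HasFDerivAt (fun y => fderiv ℝ f y e)
        (fderiv ℝ (fun y => fderiv ℝ f y e) x₀) (L 0) := by
      rw [hL0]; exact (hF x₀).hasFDerivAt
    have h3 := h2.comp_hasDerivAt 0 (hL 0)
    rw [hdg]
    exact h3
  have hmax' : ∀ t, g t ≤ g 0 := by
    intro t
    have := hmax (L t)
    simpa [hgdef, hL0] using this
  exact deriv2_nonpos_at_max (fun t => (hg' t).differentiableAt) hmax' hg''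

end Aux

set_option maxHeartbeats 2000000 in
theorem liouville_BE_subcritical_coupling (N : ℕ) (hN : 1 ≤ N) (s γ β lam : ℝ)
    (hs : 0 ≤ s) (hγ : 1 ≤ γ) (hβ0 : 0 ≤ β) (hβ : β < lam)
    (u v : EuclideanSpace ℝ (Fin N) → ℝ)
    (hu : ContDiff ℝ 2 u) (hv : ContDiff ℝ 2 v)
    (hupos : ∀ x, 0 ≤ u x) (hvpos : ∀ x, 0 ≤ v x)
    (hub : ∃ M, ∀ x, |u x| ≤ M) (hvb : ∃ M, ∀ x, |v x| ≤ M)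
    (hequ : ∀ x, -lap u x = β * u x ^ s * v x ^ (s + γ) - lam * u x ^ (2 * s + γ))
    (heqv : ∀ x, -lap v x = β * v x ^ s * u x ^ (s + γ) - lam * v x ^ (2 * s + γ)) :
    u = 0 ∧ v = 0 := by
  have hp1 : 1 ≤ 2 * s + γ := by linarith
  have hp0 : (2 * s + γ) ≠ 0 := by linarith
  have hpinv : 0 ≤ (2 * s + γ)⁻¹ := inv_nonneg.mpr (by linarith)
  have hc : 0 < lam - β := sub_pos.mpr hβ
  obtain ⟨Mu, hMu⟩ := hub
  obtain ⟨Mv, hMv⟩ := hvb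
  set M := Mu + Mv with hMdef
  set w : EuclideanSpace ℝ (Fin N) → ℝ := fun x => u x + v x with hwdef
  have hwC : ContDiff ℝ 2 w := hu.add hv
  have hwb : ∀ x, w x ≤ M := fun x =>
    add_le_add ((le_abs_self _).trans (hMu x)) ((le_abs_self _).trans (hMv x))
  -- key pointwise differential inequality
  have key : ∀ x, (lam - β) * (u x ^ (2*s+γ) + v x ^ (2*s+γ)) ≤ lap w x := by
    intro x
    have hlap : lap w x = lap u x + lap v x := lap_add hu hv x
    have h1 := hequ x
    have h2 := heqv x
    have ha : 0 ≤ u x := hupos x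
    have hb : 0 ≤ v x := hvpos x
    have hsum : s + (s + γ) ≠ 0 := by linarith
    have hab : u x ^ (2*s+γ) = u x ^ s * u x ^ (s + γ) := by
      rw [← Real.rpow_add' ha hsum]; ring_nf
    have hbb : v x ^ (2*s+γ) = v x ^ s * v x ^ (s + γ) := by
      rw [← Real.rpow_add' hb hsum]; ring_nf
    have hcross : u x ^ s * v x ^ (s+γ) + v x ^ s * u x ^ (s+γ)
        ≤ u x ^ s * u x ^ (s+γ) + v x ^ s * v x ^ (s+γ) := by
      rcases le_total (u x) (v x) with h | h
      · have e1 : u x ^ s ≤ v x ^ s := Real.rpow_le_rpow ha h hs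
        have e2 : u x ^ (s+γ) ≤ v x ^ (s+γ) := Real.rpow_le_rpow ha h (by linarith)
        nlinarith [e1, e2]
      · have e1 : v x ^ s ≤ u x ^ s := Real.rpow_le_rpow hb h hs
        have e2 : v x ^ (s+γ) ≤ u x ^ (s+γ) := Real.rpow_le_rpow hb h (by linarith)
        nlinarith [e1, e2]
    have hβmul : β * (u x ^ s * v x ^ (s+γ) + v x ^ s * u x ^ (s+γ))
        ≤ β * (u x ^ s * u x ^ (s+γ) + v x ^ s * v x ^ (s+γ)) :=
      mul_le_mul_of_nonneg_left hcross hβ0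
    rw [hlap]
    nlinarith [hβmul, hab, hbb, h1, h2]
  clear_value w
  -- main estimate for each ε > 0
  have main : ∀ ε : ℝ, 0 < ε → ∀ x,
      w x ≤ 2 * ((2*N*ε)/(lam-β)) ^ (2*s+γ)⁻¹ + ε * ‖x‖^2 := by
    intro ε hε x
    set h : EuclideanSpace ℝ (Fin N) → ℝ := fun y => w y - ε * ‖y‖^2 with hhdef
    have hqC : ContDiff ℝ 2 (fun y : EuclideanSpace ℝ (Fin N) => ε * ‖y‖^2) :=
      contDiff_const.mul (contDiff_norm_sq ℝ)
    have hhC : ContDiff ℝ 2 h := hwC.sub hqC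
    have hcont : Continuous h := hhC.continuous
    clear_value h
    set R : ℝ := Real.sqrt (max 0 ((M - h 0)/ε)) with hRdef
    clear_value R
    have hR0 : 0 ≤ R := hRdef ▸ Real.sqrt_nonneg _
    have hRsq : M - h 0 ≤ ε * R^2 := by
      have : R^2 = max 0 ((M - h 0)/ε) := by
        rw [hRdef]; exact Real.sq_sqrt (le_max_left _ _)
      rw [this]
      rcases le_total (M - h 0) 0 with hle | hle
      · have h9 : 0 ≤ ε * max 0 ((M - h 0)/ε) :=
          mul_nonneg hε.le (le_max_left _ _)
        exact hle.trans h9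
      · rw [max_eq_right (div_nonneg hle hε.le), mul_div_cancel₀ _ (ne_of_gt hε)]
    obtain ⟨x₀, hx₀mem, hx₀max⟩ :=
      (isCompact_closedBall (0 : EuclideanSpace ℝ (Fin N)) R).exists_isMaxOn
        ⟨0, by simpa [Metric.mem_closedBall] using hR0⟩ hcont.continuousOn
    have hglobal : ∀ y, h y ≤ h x₀ := by
      intro y
      rcases le_or_gt ‖y‖ R with hy | hy
      · exact hx₀max (by simpa [Metric.mem_closedBall, dist_zero_right] using hy)
      · have h0le : h 0 ≤ h x₀ := hx₀max (by simpa [Metric.mem_closedBall] using hR0)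
        have hyM : h y ≤ M - ε * ‖y‖^2 := by
          have := hwb y
          simp only [hhdef]
          linarith
        have hy2 : R^2 < ‖y‖^2 := by
          apply pow_lt_pow_left₀ hy hR0
          norm_num
        nlinarith [mul_lt_mul_of_pos_left hy2 hε]
    have hlapneg : lap h x₀ ≤ 0 := by
      have : lap h x₀ = ∑ i : Fin N,
          fderiv ℝ (fun y => fderiv ℝ h y (EuclideanSpace.single i (1:ℝ))) x₀
            (EuclideanSpace.single i (1:ℝ)) := rfl
      rw [this]
      exact Finset.sum_nonpos fun i _ => dir_secondDeriv_nonpos hhC hglobal _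
    have hlapw : lap w x₀ ≤ ε * (2*N) := by
      have hsplit : lap h x₀ = lap w x₀ - lap (fun y => ε * ‖y‖^2) x₀ := by
        rw [hhdef]; exact lap_sub hwC hqC x₀
      rw [lap_const_mul_norm_sq ε x₀] at hsplit
      linarith
    have hA : (0:ℝ) ≤ 2*N*ε/(lam-β) := by positivity
    have hkey := key x₀
    have hvnn : (0:ℝ) ≤ v x₀ ^ (2*s+γ) := Real.rpow_nonneg (hvpos x₀) _
    have hunn : (0:ℝ) ≤ u x₀ ^ (2*s+γ) := Real.rpow_nonneg (hupos x₀) _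
    have hu0 : u x₀ ^ (2*s+γ) ≤ 2*N*ε/(lam-β) := by
      rw [le_div_iff₀ hc]
      nlinarith [hkey, hlapw, mul_nonneg hc.le hvnn]
    have hv0 : v x₀ ^ (2*s+γ) ≤ 2*N*ε/(lam-β) := by
      rw [le_div_iff₀ hc]
      nlinarith [hkey, hlapw, mul_nonneg hc.le hunn]
    have hu0' : u x₀ ≤ (2*N*ε/(lam-β)) ^ (2*s+γ)⁻¹ := by
      have := Real.rpow_le_rpow hunn hu0 hpinv
      rwa [Real.rpow_rpow_inv (hupos x₀) hp0] at this
    have hv0' : v x₀ ≤ (2*N*ε/(lam-β)) ^ (2*s+γ)⁻¹ := by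
      have := Real.rpow_le_rpow hvnn hv0 hpinv
      rwa [Real.rpow_rpow_inv (hvpos x₀) hp0] at this
    have hgx := hglobal x
    have hx₀nn : (0:ℝ) ≤ ε * ‖x₀‖^2 := by positivity
    have : w x - ε * ‖x‖^2 ≤ w x₀ := by
      simp only [hhdef] at hgx
      linarith
    have hwx₀ : w x₀ ≤ 2 * ((2*N*ε)/(lam-β)) ^ (2*s+γ)⁻¹ := by
      simp only [hwdef]
      linarith
    linarith
  -- take ε → 0⁺
  have final : ∀ x, w x ≤ 0 := by
    intro x
    set f : ℝ → ℝ := fun ε => 2 * ((2*N*ε)/(lam-β)) ^ (2*s+γ)⁻¹ + ε * ‖x‖^2 with hfdef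
    have hcont0 : ContinuousAt f 0 := by
      apply ContinuousAt.add
      · apply ContinuousAt.mul continuousAt_const
        apply ContinuousAt.rpow_const
        · exact ((continuousAt_const.mul continuousAt_id).div_const _)
        · exact Or.inr hpinv
      · exact continuousAt_id.mul continuousAt_const
    have hf0 : f 0 = 0 := by
      simp [hfdef, Real.zero_rpow (inv_ne_zero hp0)]
    have htend : Filter.Tendsto f (nhdsWithin 0 (Set.Ioi (0:ℝ))) (nhds 0) := by
      have h9 : ContinuousWithinAt f (Set.Ioi (0:ℝ)) 0 := hcont0.continuousWithinAt
      have h10 := h9.tendsto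
      rwa [hf0] at h10
    have hle : ∀ᶠ ε in nhdsWithin 0 (Set.Ioi (0:ℝ)), w x ≤ f ε := by
      filter_upwards [self_mem_nhdsWithin] with ε hε
      exact main ε hε x
    exact ge_of_tendsto htend hle
  constructor
  · funext x
    have h1 := final x
    have h2 := hupos x
    have h3 := hvpos x
    simp only [hwdef] at h1
    have : u x = 0 := by linarith
    simpa using this
  · funext x
    have h1 := final x
    have h2 := hupos x
    have h3 := hvpos x
    simp only [hwdef] at h1
    have : v x = 0 := by linarith
    simpa using this
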